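/- Let G be a group, H a subgroup of G, A a generating set of G with H ⊆ A, and let (a₁, …, a_k), (b₁, …, b_k) ∈ G^k be tuples such that the cosets a₁H, …, a_kH are pairwise distinct and the cosets b₁H, …, b_kH are pairwise distinct. Let P = G * ⟨t⟩ be the free product of G with an infinite cyclic group generated by t, let L be the subgroup of P generated by H together with r_i = b_i⁻¹ta_i for i = 1, …, k, and let Z = H ∪ {r₁, …, r_k} ∪ {r₁⁻¹, …, r_k⁻¹}. Then for every h ∈ L, the word length of h with respect to Z satisfies |h|_Z ≤ 3·|h|_{A ∪ {t}}, where |h|_S denotes the least number of factors needed to write h as a product of elements of S ∪ S⁻¹. -/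

import Mathlib

noncomputable section
namespace WLA
open Monoid Monoid.Coprod List

attribute [local instance] Classical.propDecidable

variable {G : Type*} [Group G]

/-- Reducedness relation between consecutive syllables `(ε, g)` (meaning `t^ε * inl g`). -/
def Rrel : Bool × G → Bool × G → Prop := fun e e' => e'.1 = !e.1 → e.2 ≠ 1

/-- left multiplication by `t` on words. -/
def tfun : G × List (Bool × G) → G × List (Bool × G)
  | (g, (false, g₁) :: l) => if g = 1 then (g₁, l) else (1, (true, g) :: (false, g₁) :: l)
  | (g, l) => (1, (true, g) :: l)

/-- left multiplication by `t⁻¹` on words. -/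
def sfun : G × List (Bool × G) → G × List (Bool × G)
  | (g, (true, g₁) :: l) => if g = 1 then (g₁, l) else (1, (false, g) :: (true, g₁) :: l)
  | (g, l) => (1, (false, g) :: l)

@[simp] lemma tfun_nil (g : G) : tfun (g, []) = (1, [(true, g)]) := rfl
@[simp] lemma tfun_true (g g₁ : G) (l) :
    tfun (g, (true, g₁) :: l) = (1, (true, g) :: (true, g₁) :: l) := rfl
lemma tfun_false (g g₁ : G) (l) :
    tfun (g, (false, g₁) :: l)
      = if g = 1 then (g₁, l) else (1, (true, g) :: (false, g₁) :: l) := by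
  simp [tfun]

@[simp] lemma sfun_nil (g : G) : sfun (g, []) = (1, [(false, g)]) := rfl
@[simp] lemma sfun_false (g g₁ : G) (l) :
    sfun (g, (false, g₁) :: l) = (1, (false, g) :: (false, g₁) :: l) := rfl
lemma sfun_true (g g₁ : G) (l) :
    sfun (g, (true, g₁) :: l)
      = if g = 1 then (g₁, l) else (1, (false, g) :: (true, g₁) :: l) := by
  simp [sfun]

lemma chain'_tfun {w : G × List (Bool × G)} (h : w.2.Chain' Rrel) :
    (tfun w).2.Chain' Rrel := by
  obtain ⟨g, l⟩ := w
  rcases l with _ | ⟨⟨ε, g₁⟩, l⟩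
  · simp [List.Chain']
  · cases ε
    · rw [tfun_false]
      split_ifs with hg
      · exact (List.isChain_cons.mp h).2
      · exact List.isChain_cons.mpr ⟨fun e _ _ => hg, h⟩
    · rw [tfun_true]
      refine List.isChain_cons.mpr ⟨fun e he => ?_, h⟩
      simp only [List.head?_cons, Option.mem_def, Option.some.injEq] at he
      subst he
      intro hc
      simp [Rrel] at hc

lemma chain'_sfun {w : G × List (Bool × G)} (h : w.2.Chain' Rrel) :
    (sfun w).2.Chain' Rrel := by
  obtain ⟨g, l⟩ := w
  rcases l with _ | ⟨⟨ε, g₁⟩, l⟩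
  · simp [List.Chain']
  · cases ε
    · rw [sfun_false]
      refine List.isChain_cons.mpr ⟨fun e he => ?_, h⟩
      simp only [List.head?_cons, Option.mem_def, Option.some.injEq] at he
      subst he
      intro hc
      simp [Rrel] at hc
    · rw [sfun_true]
      split_ifs with hg
      · exact (List.isChain_cons.mp h).2
      · exact List.isChain_cons.mpr ⟨fun e _ _ => hg, h⟩

lemma sfun_tfun {w : G × List (Bool × G)} (h : w.2.Chain' Rrel) : sfun (tfun w) = w := by
  obtain ⟨g, l⟩ := w
  rcases l with _ | ⟨⟨ε, g₁⟩, l⟩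
  · simp [sfun_true]
  · cases ε
    · rw [tfun_false]
      split_ifs with hg
      · subst hg
        rcases l with _ | ⟨⟨ε₂, g₂⟩, l⟩
        · simp
        · cases ε₂
          · simp
          · have hg₁ : g₁ ≠ 1 := (List.isChain_cons_cons.mp h).1 (by simp)
            rw [sfun_true, if_neg hg₁]
      · rw [sfun_true, if_pos rfl]
    · rw [tfun_true, sfun_true, if_pos rfl]

lemma tfun_sfun {w : G × List (Bool × G)} (h : w.2.Chain' Rrel) : tfun (sfun w) = w := by
  obtain ⟨g, l⟩ := w
  rcases l with _ | ⟨⟨ε, g₁⟩, l⟩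
  · simp [tfun_false]
  · cases ε
    · rw [sfun_false, tfun_false, if_pos rfl]
    · rw [sfun_true]
      split_ifs with hg
      · subst hg
        rcases l with _ | ⟨⟨ε₂, g₂⟩, l⟩
        · simp
        · cases ε₂
          · have hg₁ : g₁ ≠ 1 := (List.isChain_cons_cons.mp h).1 (by simp)
            rw [tfun_false, if_neg hg₁]
          · simp
      · rw [tfun_false, if_pos rfl]

/-- The set of reduced words over `G * ⟨t⟩`. -/
def XW (G : Type*) [Group G] : Type _ := {w : G × List (Bool × G) // w.2.Chain' Rrel}

/-- `t` acting on reduced words. -/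
def tperm : Equiv.Perm (XW G) where
  toFun w := ⟨tfun w.1, chain'_tfun w.2⟩
  invFun w := ⟨sfun w.1, chain'_sfun w.2⟩
  left_inv w := Subtype.ext (sfun_tfun w.2)
  right_inv w := Subtype.ext (tfun_sfun w.2)

/-- `G` acting on reduced words. -/
def ghom : G →* Equiv.Perm (XW G) where
  toFun g :=
    { toFun := fun w => ⟨(g * w.1.1, w.1.2), w.2⟩
      invFun := fun w => ⟨(g⁻¹ * w.1.1, w.1.2), w.2⟩
      left_inv := fun w => Subtype.ext (by simp)
      right_inv := fun w => Subtype.ext (by simp) }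
  map_one' := Equiv.ext fun w => Subtype.ext (by simp; rfl)
  map_mul' g₁ g₂ := Equiv.ext fun w => Subtype.ext (by simp [mul_assoc]; rfl)

/-- The action of `G * ⟨t⟩` on reduced words. -/
def phi : Monoid.Coprod G (FreeGroup Unit) →* Equiv.Perm (XW G) :=
  Monoid.Coprod.lift ghom (FreeGroup.lift fun _ => tperm)

lemma phi_inl (g : G) (w : XW G) :
    phi (inl g) w = ⟨(g * w.1.1, w.1.2), w.2⟩ := by
  rw [phi, Monoid.Coprod.lift_apply_inl]; rfl

lemma phi_t (w : XW G) :
    phi (inr (FreeGroup.of ()) : Monoid.Coprod G (FreeGroup Unit)) w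
      = ⟨tfun w.1, chain'_tfun w.2⟩ := by
  rw [phi, Monoid.Coprod.lift_apply_inr, FreeGroup.lift_apply_of]; rfl

lemma phi_t_inv (w : XW G) :
    phi ((inr (FreeGroup.of ()) : Monoid.Coprod G (FreeGroup Unit))⁻¹) w
      = ⟨sfun w.1, chain'_sfun w.2⟩ := by
  rw [map_inv, phi, Monoid.Coprod.lift_apply_inr, FreeGroup.lift_apply_of]; rfl

/-- `t^ε`. -/
def te (ε : Bool) : Monoid.Coprod G (FreeGroup Unit) :=
  cond ε (inr (FreeGroup.of ())) (inr (FreeGroup.of ()))⁻¹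

/-- Embedding of words into `G * ⟨t⟩`. -/
def emb (w : G × List (Bool × G)) : Monoid.Coprod G (FreeGroup Unit) :=
  inl w.1 * (w.2.map fun e => te e.1 * inl e.2).prod

@[simp] lemma emb_nil (g : G) : emb (g, ([] : List (Bool × G))) = inl g := by
  simp [emb]

lemma emb_cons (g g₁ : G) (ε : Bool) (l : List (Bool × G)) :
    emb (g, (ε, g₁) :: l) = inl g * (te ε * emb (g₁, l)) := by
  simp [emb, mul_assoc]

/-- The empty reduced word. -/
def nilX : XW G := ⟨(1, []), List.isChain_nil⟩

lemma eval (w : G × List (Bool × G)) (hw : w.2.Chain' Rrel) :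
    phi (emb w) (nilX : XW G) = ⟨w, hw⟩ := by
  obtain ⟨g, l⟩ := w
  induction l generalizing g with
  | nil => simp only [emb_nil]; exact Subtype.ext (by rw [phi_inl]; simp [nilX])
  | cons e l ih =>
    obtain ⟨ε, g₁⟩ := e
    obtain ⟨hhd, htl⟩ : (∀ y ∈ l.head?, Rrel (ε, g₁) y) ∧ (g₁, l).2.Chain' Rrel :=
      List.isChain_cons.mp hw
    rw [emb_cons, map_mul, map_mul, Equiv.Perm.mul_apply, Equiv.Perm.mul_apply,
      ih g₁ htl]
    cases ε
    · simp only [te, cond]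
      erw [phi_t_inv]
      refine Subtype.ext ?_
      have hs : sfun (g₁, l) = (1, (false, g₁) :: l) := by
        rcases l with _ | ⟨⟨ε₂, g₂⟩, l⟩
        · simp
        · cases ε₂
          · simp
          · have : g₁ ≠ 1 := hhd (true, g₂) (by simp) (by simp)
            rw [sfun_true, if_neg this]
      erw [phi_inl]
      simp [hs]
    · simp only [te, cond]
      erw [phi_t]
      refine Subtype.ext ?_
      have hs : tfun (g₁, l) = (1, (true, g₁) :: l) := by
        rcases l with _ | ⟨⟨ε₂, g₂⟩, l⟩
        · simp
        · cases ε₂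
          · have : g₁ ≠ 1 := hhd (false, g₂) (by simp) (by simp)
            rw [tfun_false, if_neg this]
          · simp
      erw [phi_inl]
      simp [hs]

lemma len_tfun (w : G × List (Bool × G)) : (tfun w).2.length ≤ w.2.length + 1 := by
  obtain ⟨g, l⟩ := w
  rcases l with _ | ⟨⟨ε₂, g₂⟩, l⟩
  · simp
  · cases ε₂
    · rw [tfun_false]; split_ifs <;> simp <;> omega
    · simp

lemma len_sfun (w : G × List (Bool × G)) : (sfun w).2.length ≤ w.2.length + 1 := by
  obtain ⟨g, l⟩ := w
  rcases l with _ | ⟨⟨ε₂, g₂⟩, l⟩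
  · simp
  · cases ε₂
    · simp
    · rw [sfun_true]; split_ifs <;> simp <;> omega

lemma len_letter (x : Monoid.Coprod G (FreeGroup Unit))
    (hx : (∃ g, x = inl g) ∨ x = te true ∨ x = te false) (w : XW G) :
    ((phi x) w).1.2.length ≤ w.1.2.length + 1 := by
  rcases hx with ⟨g, rfl⟩ | rfl | rfl
  · rw [phi_inl]; simp
  · simp only [te, cond]
    rw [phi_t]
    exact len_tfun w.1
  · simp only [te, cond]
    rw [phi_t_inv]
    exact len_sfun w.1

lemma len_prod (l : List (Monoid.Coprod G (FreeGroup Unit)))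
    (hl : ∀ x ∈ l, (∃ g, x = inl g) ∨ x = te true ∨ x = te false) (w : XW G) :
    ((phi l.prod) w).1.2.length ≤ l.length + w.1.2.length := by
  induction l generalizing w with
  | nil => simp
  | cons x l ih =>
    rw [List.prod_cons, map_mul, Equiv.Perm.mul_apply]
    calc ((phi x) ((phi l.prod) w)).1.2.length
        ≤ ((phi l.prod) w).1.2.length + 1 :=
          len_letter x (hl x (List.mem_cons_self)) _
      _ ≤ l.length + w.1.2.length + 1 := by
          have := ih (fun y hy => hl y (List.mem_cons_of_mem x hy)) w
          omega
      _ = (x :: l).length + w.1.2.length := by simp; omega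

variable {k : ℕ}

/-- `r i = b i ⁻¹ t a i`. -/
def rr (a b : Fin k → G) (i : Fin k) : Monoid.Coprod G (FreeGroup Unit) :=
  (inl (b i))⁻¹ * inr (FreeGroup.of ()) * inl (a i)

/-- Reducedness for alternating `H`/`r`-words. -/
def Qrel : (Fin k × Bool × G) → (Fin k × Bool × G) → Prop :=
  fun e e' => (e'.1 = e.1 ∧ e'.2.1 = !e.2.1) → e.2.2 ≠ 1

/-- Embedding of alternating words. -/
def zemb (a b : Fin k → G) (g : G) (l : List (Fin k × Bool × G)) :
    Monoid.Coprod G (FreeGroup Unit) :=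
  inl g * (l.map fun e => (cond e.2.1 (rr a b e.1) (rr a b e.1)⁻¹) * inl e.2.2).prod

@[simp] lemma zemb_nil (a b : Fin k → G) (g : G) : zemb a b g [] = inl g := by simp [zemb]

lemma zemb_cons (a b : Fin k → G) (g h : G) (i : Fin k) (δ : Bool)
    (l : List (Fin k × Bool × G)) :
    zemb a b g ((i, δ, h) :: l)
      = inl g * ((cond δ (rr a b i) (rr a b i)⁻¹) * zemb a b h l) := by
  simp [zemb, mul_assoc]

lemma inl_mul_zemb (a b : Fin k → G) (g g' : G) (l : List (Fin k × Bool × G)) :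
    inl g * zemb a b g' l = zemb a b (g * g') l := by
  simp [zemb, mul_assoc]

/-- Step 1: every element of `L` has a reduced alternating form. -/
lemma step1 (H : Subgroup G) (a b : Fin k → G)
    (lw : List (Monoid.Coprod G (FreeGroup Unit)))
    (hlw : ∀ y ∈ lw, (∃ g ∈ H, y = inl g) ∨ (∃ i, y = rr a b i) ∨ ∃ i, y = (rr a b i)⁻¹) :
    ∃ (g : G) (l : List (Fin k × Bool × G)), g ∈ H ∧ (∀ e ∈ l, e.2.2 ∈ H) ∧
      l.Chain' Qrel ∧ zemb a b g l = lw.prod := by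
  induction lw with
  | nil => exact ⟨1, [], one_mem _, by simp, List.isChain_nil, by simp⟩
  | cons x lw ih =>
    obtain ⟨g, l, hgH, hlH, hch, hze⟩ := ih (fun y hy => hlw y (List.mem_cons_of_mem x hy))
    rw [List.prod_cons, ← hze]
    rcases hlw x (List.mem_cons_self) with ⟨g₀, hg₀, rfl⟩ | ⟨i, rfl⟩ | ⟨i, rfl⟩
    · exact ⟨g₀ * g, l, mul_mem hg₀ hgH, hlH, hch, (inl_mul_zemb a b g₀ g l).symm⟩
    · -- multiply by `rr i` on the left
      rcases l with _ | ⟨⟨i', δ', h₁⟩, rest⟩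
      · refine ⟨1, [(i, true, g)], one_mem _, by simpa using hgH, List.isChain_singleton _, ?_⟩
        rw [zemb_cons, zemb_nil]
        simp
      · by_cases hc : i' = i ∧ δ' = false ∧ g = 1
        · obtain ⟨rfl, rfl, rfl⟩ := hc
          refine ⟨h₁, rest, hlH _ (List.mem_cons_self), fun e he => hlH e (List.mem_cons_of_mem _ he),
            (List.isChain_cons.mp hch).2, ?_⟩
          rw [zemb_cons]
          simp [mul_assoc]
        · refine ⟨1, (i, true, g) :: (i', δ', h₁) :: rest, one_mem _,
            ?_, ?_, ?_⟩
          · intro e he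
            rcases List.mem_cons.mp he with rfl | he
            · exact hgH
            · exact hlH e he
          · refine List.isChain_cons.mpr ⟨fun e' he' => ?_, hch⟩
            simp only [List.head?_cons, Option.mem_def, Option.some.injEq] at he'
            subst he'
            rintro ⟨h1, h2⟩ hg1
            exact hc ⟨h1, by simpa using h2, hg1⟩
          · rw [zemb_cons, zemb_cons]
            simp [mul_assoc]
    · -- multiply by `(rr i)⁻¹` on the left
      rcases l with _ | ⟨⟨i', δ', h₁⟩, rest⟩
      · refine ⟨1, [(i, false, g)], one_mem _, by simpa using hgH, List.isChain_singleton _, ?_⟩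
        rw [zemb_cons, zemb_nil]
        simp
      · by_cases hc : i' = i ∧ δ' = true ∧ g = 1
        · obtain ⟨rfl, rfl, rfl⟩ := hc
          refine ⟨h₁, rest, hlH _ (List.mem_cons_self), fun e he => hlH e (List.mem_cons_of_mem _ he),
            (List.isChain_cons.mp hch).2, ?_⟩
          rw [zemb_cons]
          simp [mul_assoc]
        · refine ⟨1, (i, false, g) :: (i', δ', h₁) :: rest, one_mem _,
            ?_, ?_, ?_⟩
          · intro e he
            rcases List.mem_cons.mp he with rfl | he
            · exact hgH
            · exact hlH e he
          · refine List.isChain_cons.mpr ⟨fun e' he' => ?_, hch⟩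
            simp only [List.head?_cons, Option.mem_def, Option.some.injEq] at he'
            subst he'
            rintro ⟨h1, h2⟩ hg1
            exact hc ⟨h1, by simpa using h2, hg1⟩
          · rw [zemb_cons, zemb_cons]
            simp [mul_assoc]

/-- Expansion of an alternating word into a word over `G` and `t`. -/
def xexp2 (a b : Fin k → G) : G → List (Fin k × Bool × G) → G × List (Bool × G)
  | g, [] => (g, [])
  | g, e :: rest =>
    let w := xexp2 a b ((cond e.2.1 (a e.1) (b e.1)) * e.2.2) rest
    (g * (cond e.2.1 (b e.1)⁻¹ (a e.1)⁻¹), (e.2.1, w.1) :: w.2)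

@[simp] lemma xexp2_nil (a b : Fin k → G) (g : G) : xexp2 a b g [] = (g, []) := rfl

lemma xexp2_cons (a b : Fin k → G) (g h : G) (i : Fin k) (δ : Bool)
    (rest : List (Fin k × Bool × G)) :
    xexp2 a b g ((i, δ, h) :: rest)
      = (g * (cond δ (b i)⁻¹ (a i)⁻¹),
          (δ, (xexp2 a b ((cond δ (a i) (b i)) * h) rest).1)
            :: (xexp2 a b ((cond δ (a i) (b i)) * h) rest).2) := rfl

lemma cond_rr (a b : Fin k → G) (i : Fin k) (δ : Bool) :
    (cond δ (rr a b i) (rr a b i)⁻¹ : Monoid.Coprod G (FreeGroup Unit))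
      = inl (cond δ (b i)⁻¹ (a i)⁻¹) * te δ * inl (cond δ (a i) (b i)) := by
  cases δ <;> simp [rr, te, mul_assoc]

lemma xexp2_len (a b : Fin k → G) (g : G) (l : List (Fin k × Bool × G)) :
    (xexp2 a b g l).2.length = l.length := by
  induction l generalizing g with
  | nil => simp
  | cons e rest ih =>
    obtain ⟨i, δ, h⟩ := e
    rw [xexp2_cons]
    simp [ih]

lemma xexp2_emb (a b : Fin k → G) (g : G) (l : List (Fin k × Bool × G)) :
    emb (xexp2 a b g l) = zemb a b g l := by
  induction l generalizing g with
  | nil => simp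
  | cons e rest ih =>
    obtain ⟨i, δ, h⟩ := e
    rw [xexp2_cons, zemb_cons, cond_rr]
    rw [show ((δ, (xexp2 a b (cond δ (a i) (b i) * h) rest).1)
          :: (xexp2 a b (cond δ (a i) (b i) * h) rest).2)
        = (xexp2 a b (cond δ (a i) (b i) * h) rest).2.cons
            (δ, (xexp2 a b (cond δ (a i) (b i) * h) rest).1) from rfl]
    rw [List.cons_eq_cons.mpr ⟨rfl, rfl⟩]
    rw [show (g * cond δ (b i)⁻¹ (a i)⁻¹,
        (δ, (xexp2 a b (cond δ (a i) (b i) * h) rest).1)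
          :: (xexp2 a b (cond δ (a i) (b i) * h) rest).2)
      = (g * cond δ (b i)⁻¹ (a i)⁻¹,
        ((δ, (xexp2 a b (cond δ (a i) (b i) * h) rest).1)
          :: (xexp2 a b (cond δ (a i) (b i) * h) rest).2)) from rfl]
    rw [emb_cons]
    rw [show ((xexp2 a b (cond δ (a i) (b i) * h) rest).1,
        (xexp2 a b (cond δ (a i) (b i) * h) rest).2)
      = xexp2 a b (cond δ (a i) (b i) * h) rest from rfl]
    rw [ih]
    simp [map_mul, mul_assoc, ← inl_mul_zemb]

lemma xexp2_chain (H : Subgroup G) (a b : Fin k → G)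
    (ha : Function.Injective fun i : Fin k => ((a i : G) : G ⧸ H))
    (hb : Function.Injective fun i : Fin k => ((b i : G) : G ⧸ H))
    (g : G) (l : List (Fin k × Bool × G)) (hmem : ∀ e ∈ l, e.2.2 ∈ H)
    (hch : l.Chain' Qrel) :
    (xexp2 a b g l).2.Chain' Rrel := by
  induction l generalizing g with
  | nil => simp [List.Chain']
  | cons e rest ih =>
    obtain ⟨i, δ, h⟩ := e
    rw [xexp2_cons]
    refine List.isChain_cons.mpr ⟨fun e'' he'' => ?_,
      ih _ (fun e he => hmem e (List.mem_cons_of_mem _ he)) (List.isChain_cons.mp hch).2⟩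
    rcases rest with _ | ⟨⟨i', δ', h'⟩, rest'⟩
    · simp at he''
    · rw [xexp2_cons] at he''
      simp only [List.head?_cons, Option.mem_def, Option.some.injEq] at he''
      subst he''
      rw [xexp2_cons]
      intro hδ heq
      -- hδ : δ' = !δ ; heq : (cond δ (a i) (b i)) * h * (cond δ' (b i')⁻¹ (a i')⁻¹) = 1
      have hH : h ∈ H := hmem (i, δ, h) (List.mem_cons_self)
      have hQ : Qrel (i, δ, h) (i', δ', h') :=
        (List.isChain_cons.mp hch).1 (i', δ', h') (by simp)
      cases δ
      · -- δ = false, δ' = true : b i * h * (b i')⁻¹ = 1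
        simp only [Bool.not_false] at hδ
        subst hδ
        simp only [cond] at heq
        have hbi : b i * h = b i' := by
          have := mul_eq_one_iff_eq_inv.mp heq
          simpa using this
        have hii : i = i' := hb (by
          show ((b i : G) : G ⧸ H) = ((b i' : G) : G ⧸ H)
          rw [← hbi, QuotientGroup.mk_mul_of_mem _ hH])
        subst hii
        have : h = 1 := by
          have := hbi
          rwa [mul_eq_left] at this
        exact hQ ⟨rfl, rfl⟩ this
      · -- δ = true, δ' = false : a i * h * (a i')⁻¹ = 1
        simp only [Bool.not_true] at hδ
        subst hδ
        simp only [cond] at heq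
        have hai : a i * h = a i' := by
          have := mul_eq_one_iff_eq_inv.mp heq
          simpa using this
        have hii : i = i' := ha (by
          show ((a i : G) : G ⧸ H) = ((a i' : G) : G ⧸ H)
          rw [← hai, QuotientGroup.mk_mul_of_mem _ hH])
        subst hii
        have : h = 1 := by
          have := hai
          rwa [mul_eq_left] at this
        exact hQ ⟨rfl, rfl⟩ this

lemma zword_prod (a b : Fin k → G) (g : G) (l : List (Fin k × Bool × G)) :
    (inl g :: l.flatMap fun e =>
        [cond e.2.1 (rr a b e.1) (rr a b e.1)⁻¹, inl e.2.2]).prod = zemb a b g l := by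
  induction l generalizing g with
  | nil => simp
  | cons e rest ih =>
    obtain ⟨i, δ, h⟩ := e
    rw [List.flatMap_cons]
    have : (inl g :: ([cond δ (rr a b i) (rr a b i)⁻¹, inl h]
          ++ rest.flatMap fun e => [cond e.2.1 (rr a b e.1) (rr a b e.1)⁻¹, inl e.2.2])).prod
        = inl g * ((cond δ (rr a b i) (rr a b i)⁻¹)
            * (inl h :: rest.flatMap fun e =>
                [cond e.2.1 (rr a b e.1) (rr a b e.1)⁻¹, inl e.2.2]).prod) := by
      simp [mul_assoc]
    rw [this, ih h, zemb_cons]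

lemma zword_len (a b : Fin k → G) (l : List (Fin k × Bool × G)) :
    (l.flatMap fun e =>
        [cond e.2.1 (rr a b e.1) (rr a b e.1)⁻¹, inl (M := G) e.2.2]).length
      = 2 * l.length := by
  induction l with
  | nil => simp
  | cons e rest ih => rw [List.flatMap_cons]; simp [ih]; omega

end WLA
end

/-- `WordLengthLE S g n` : the word length of `g` with respect to the set `S` is at most `n`,
i.e. `g` can be written as a product of at most `n` elements of `S ∪ S⁻¹`. -/
def WordLengthLE {M : Type*} [Group M] (S : Set M) (g : M) (n : ℕ) : Prop :=
  ∃ l : List M, l.length ≤ n ∧ (∀ x ∈ l, x ∈ S ∨ x⁻¹ ∈ S) ∧ l.prod = g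

open WLA Monoid.Coprod

/-- Let `H ≤ G`, let `A` be a generating set of `G` containing `H`, and let `(a i)`, `(b i)`
be tuples in `G` whose left `H`-cosets are pairwise distinct. In `P = G * ⟨t⟩`, set
`r i = (b i)⁻¹ t (a i)`, `Z = H ∪ {r i} ∪ {(r i)⁻¹}`, and let `L = ⟨Z⟩`. Then for every
`h ∈ L` we have `|h|_Z ≤ 3 |h|_{A ∪ {t}}`. -/
theorem word_length_lipschitz (G : Type*) [Group G] (H : Subgroup G) (A : Set G)
    (hA : Subgroup.closure A = ⊤) (hHA : (H : Set G) ⊆ A)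
    (k : ℕ) (a b : Fin k → G)
    (ha : Function.Injective fun i : Fin k => ((a i : G) : G ⧸ H))
    (hb : Function.Injective fun i : Fin k => ((b i : G) : G ⧸ H))
    (t : Monoid.Coprod G (FreeGroup Unit))
    (ht : t = Monoid.Coprod.inr (FreeGroup.of ()))
    (r : Fin k → Monoid.Coprod G (FreeGroup Unit))
    (hr : ∀ i, r i = (Monoid.Coprod.inl (b i))⁻¹ * t * Monoid.Coprod.inl (a i))
    (Z : Set (Monoid.Coprod G (FreeGroup Unit)))
    (hZ : Z = (Monoid.Coprod.inl '' (H : Set G)) ∪ Set.range r ∪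
      Set.range fun i => (r i)⁻¹)
    (L : Subgroup (Monoid.Coprod G (FreeGroup Unit)))
    (hL : L = Subgroup.closure Z) :
    ∀ h ∈ L, ∀ n : ℕ,
      WordLengthLE ((Monoid.Coprod.inl '' A) ∪ {t}) h n → WordLengthLE Z h (3 * n) := by
  subst ht hL hZ
  have hrr : r = rr a b := funext fun i => hr i
  subst hrr
  rintro h hh n ⟨l, hlen, hmem, hprod⟩
  -- the case of the empty word
  rcases Nat.eq_zero_or_pos n with rfl | hn
  · have hl0 : l = [] := List.length_eq_zero_iff.mp (Nat.le_zero.mp hlen)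
    subst hl0
    exact ⟨[], by simp, by simp, hprod⟩
  -- extract a reduced alternating form for h
  rw [← Subgroup.mem_toSubmonoid, Subgroup.closure_toSubmonoid] at hh
  obtain ⟨lw, hlw, hlwprod⟩ := Submonoid.exists_list_of_mem_closure hh
  have hlw' : ∀ y ∈ lw, (∃ g ∈ H, y = inl g) ∨ (∃ i, y = rr a b i) ∨
      ∃ i, y = (rr a b i)⁻¹ := by
    intro y hy
    rcases hlw y hy with hy' | hy'
    · rcases hy' with (⟨g, hgH, rfl⟩ | ⟨i, rfl⟩) | ⟨i, rfl⟩
      · exact Or.inl ⟨g, hgH, rfl⟩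
      · exact Or.inr (Or.inl ⟨i, rfl⟩)
      · exact Or.inr (Or.inr ⟨i, rfl⟩)
    · rw [Set.mem_inv] at hy'
      rcases hy' with (⟨g, hgH, hg⟩ | ⟨i, hi⟩) | ⟨i, hi⟩
      · refine Or.inl ⟨g⁻¹, inv_mem hgH, ?_⟩
        rw [map_inv, hg, inv_inv]
      · exact Or.inr (Or.inr ⟨i, by rw [hi, inv_inv]⟩)
      · exact Or.inr (Or.inl ⟨i, (inv_injective hi).symm⟩)
  obtain ⟨g₀, lz, hg₀, hlzH, hch, hze⟩ := step1 H a b lw hlw'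
  rw [hlwprod] at hze
  -- compare syllable counts via the action on reduced words
  have hchain := xexp2_chain H a b ha hb g₀ lz hlzH hch
  have h1 : phi h (nilX : XW G) = ⟨xexp2 a b g₀ lz, hchain⟩ := by
    rw [← hze, ← xexp2_emb]
    exact eval _ hchain
  have hletters : ∀ x ∈ l, (∃ g, x = inl g) ∨ x = te true ∨ x = te false := by
    intro x hx
    rcases hmem x hx with hx' | hx'
    · rcases hx' with ⟨g, _, rfl⟩ | hx'
      · exact Or.inl ⟨g, rfl⟩
      · rw [Set.mem_singleton_iff] at hx'
        exact Or.inr (Or.inl hx')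
    · rcases hx' with ⟨g, _, hg⟩ | hx'
      · exact Or.inl ⟨g⁻¹, by rw [map_inv, hg, inv_inv]⟩
      · rw [Set.mem_singleton_iff] at hx'
        refine Or.inr (Or.inr ?_)
        rw [← inv_inv x, hx']
        rfl
  have h2 : ((phi h) (nilX : XW G)).1.2.length ≤ l.length := by
    rw [← hprod]
    simpa [nilX] using len_prod l hletters nilX
  have hcount : lz.length ≤ n := by
    have := xexp2_len a b g₀ lz
    rw [h1] at h2
    simp only at h2
    omega
  -- build the Z-word
  refine ⟨inl g₀ :: lz.flatMap fun e =>
      [cond e.2.1 (rr a b e.1) (rr a b e.1)⁻¹, inl e.2.2], ?_, ?_, ?_⟩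
  · rw [List.length_cons, zword_len]
    omega
  · intro x hx
    rcases List.mem_cons.mp hx with rfl | hx
    · exact Or.inl (Or.inl (Or.inl ⟨g₀, hg₀, rfl⟩))
    · obtain ⟨e, helz, hxe⟩ := List.mem_flatMap.mp hx
      rcases List.mem_cons.mp hxe with rfl | hxe
      · cases hδ : e.2.1
        · simp only [cond_false]
          exact Or.inl (Or.inr ⟨e.1, rfl⟩)
        · simp only [cond_true]
          exact Or.inl (Or.inl (Or.inr ⟨e.1, rfl⟩))
      · rcases List.mem_cons.mp hxe with rfl | hxe
        · exact Or.inl (Or.inl (Or.inl ⟨e.2.2, hlzH e helz, rfl⟩))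
        · exact absurd hxe List.not_mem_nil
  · rw [zword_prod, hze]
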